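/- Let V be a finite-dimensional real inner product space, b ∈ V with ‖b‖ = 1, g ∈ ℝ with |g| < 2, h = √(1 − g²/4), and let q, v, A, B, t, λ be as in the Finsleroid setting; put β_y(w) = ⟨b,w⟩ + (g/2)⟨v(y),w⟩/q(y). Then for every y with q(y) > 0, the mixed second derivative of λ (first in the first argument, then in the second) evaluated at the diagonal point (y, y), applied to (w₁, w₂), equals [β_y(w₁)β_y(w₂) + h²(⟨w₁,w₂⟩ − ⟨b,w₁⟩⟨b,w₂⟩)]/B(y) − ⟨t(y),w₁⟩⟨t(y),w₂⟩/B(y)². -/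

import Mathlib

open scoped InnerProductSpace
open Filter Topology

set_option maxHeartbeats 2000000 in
/-- In the Finsleroid setting, the mixed second derivative of `λ` (first
in the first argument, then in the second) at a diagonal point `(y, y)` with
`q(y) > 0`, applied to `(w₁, w₂)`, equals
`[β_y(w₁)β_y(w₂) + h²(⟨w₁,w₂⟩ − ⟨b,w₁⟩⟨b,w₂⟩)]/B(y) − ⟨t(y),w₁⟩⟨t(y),w₂⟩/B(y)²`,
where `β_y(w) = ⟨b,w⟩ + (g/2)⟨v(y),w⟩/q(y)`. -/
theorem finsleroid_lambda_mixed_second_derivative_diagonal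
    {V : Type*} [NormedAddCommGroup V] [InnerProductSpace ℝ V] [FiniteDimensional ℝ V]
    (b : V) (hb : ‖b‖ = 1) (g h : ℝ) (hg : |g| < 2)
    (hh : h = Real.sqrt (1 - g ^ 2 / 4))
    (q A B : V → ℝ) (v t : V → V) (lam : V → V → ℝ)
    (hq : ∀ y : V, q y = Real.sqrt (‖y‖ ^ 2 - ⟪b, y⟫_ℝ ^ 2))
    (hv : ∀ y : V, v y = y - ⟪b, y⟫_ℝ • b)
    (hA : ∀ y : V, A y = ⟪b, y⟫_ℝ + (g / 2) * q y)
    (hB : ∀ y : V, B y = ⟪b, y⟫_ℝ ^ 2 + g * ⟪b, y⟫_ℝ * q y + q y ^ 2)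
    (ht : ∀ y : V, t y = y + (g / 2) • (q y • b + (⟪b, y⟫_ℝ / q y) • v y))
    (hlam : ∀ y₁ y₂ : V, y₁ ≠ 0 → y₂ ≠ 0 →
      lam y₁ y₂ = (A y₁ * A y₂ + h ^ 2 * (⟪y₁, y₂⟫_ℝ - ⟪b, y₁⟫_ℝ * ⟪b, y₂⟫_ℝ))
        / Real.sqrt (B y₁ * B y₂)) :
    ∀ y : V, 0 < q y → ∀ w₁ w₂ : V,
      (fderiv ℝ (fun z => fderiv ℝ (fun y' => lam y' z) y) y w₂) w₁
        = ((⟪b, w₁⟫_ℝ + (g / 2) * ⟪v y, w₁⟫_ℝ / q y)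
              * (⟪b, w₂⟫_ℝ + (g / 2) * ⟪v y, w₂⟫_ℝ / q y)
            + h ^ 2 * (⟪w₁, w₂⟫_ℝ - ⟪b, w₁⟫_ℝ * ⟪b, w₂⟫_ℝ)) / B y
          - ⟪t y, w₁⟫_ℝ * ⟪t y, w₂⟫_ℝ / B y ^ 2 := by
  intro y hqy w₁ w₂
  have hg2 : g ^ 2 < 4 := by
    have h1 := abs_lt.mp hg
    nlinarith [h1.1, h1.2]
  have hh2 : h ^ 2 = 1 - g ^ 2 / 4 := by
    rw [hh, Real.sq_sqrt (by nlinarith)]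
  have hbb : ⟪b, b⟫_ℝ = (1 : ℝ) := by
    rw [real_inner_self_eq_norm_sq, hb]; norm_num
  set Q : V → ℝ := fun z => ⟪z, z⟫_ℝ - ⟪b, z⟫_ℝ * ⟪b, z⟫_ℝ with hQdef
  have hqQ : ∀ z, q z = Real.sqrt (Q z) := by
    intro z; rw [hq, hQdef]
    congr 1
    show _ = ⟪z, z⟫_ℝ - ⟪b, z⟫_ℝ * ⟪b, z⟫_ℝ
    rw [real_inner_self_eq_norm_sq]; ring
  have hQy : 0 < Q y := Real.sqrt_pos.mp (by rw [← hqQ y]; exact hqy)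
  have hy0 : y ≠ 0 := by
    intro h0
    rw [h0] at hQy; simp [hQdef] at hQy
  have hq0 : q y ≠ 0 := ne_of_gt hqy
  have hqs : q y ^ 2 = Q y := by rw [hqQ]; exact Real.sq_sqrt hQy.le
  have hqnn : ∀ z, 0 ≤ q z := fun z => (hq z) ▸ Real.sqrt_nonneg _
  have hBnn : ∀ z, 0 ≤ B z := by
    intro z
    rw [hB]
    nlinarith [sq_nonneg (⟪b, z⟫_ℝ + g * q z / 2), sq_nonneg (q z), hg2]
  have hBy : 0 < B y := by
    rw [hB]
    nlinarith [sq_nonneg (⟪b, y⟫_ℝ + g * q y / 2), mul_pos hqy hqy, hg2]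
  set s : ℝ := Real.sqrt (B y) with hsdef
  have hs2 : s ^ 2 = B y := Real.sq_sqrt hBy.le
  have hs0 : 0 < s := Real.sqrt_pos.mpr hBy
  have hsne : s ≠ 0 := ne_of_gt hs0
  -- inner product facts
  have hvb : ⟪b, v y⟫_ℝ = 0 := by
    rw [hv]; simp [inner_sub_right, inner_smul_right, hbb, hb]
  have hvv : ⟪v y, v y⟫_ℝ = q y ^ 2 := by
    rw [hqs, hv, hQdef]
    simp only [inner_sub_left, inner_sub_right, inner_smul_left, inner_smul_right,
      RCLike.star_def, conj_trivial, hbb]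
    rw [real_inner_comm y b]
    ring
  have htw : ∀ w : V, ⟪t y, w⟫_ℝ
      = (⟪b, y⟫_ℝ + g * q y / 2) * ⟪b, w⟫_ℝ
        + (1 + g * ⟪b, y⟫_ℝ / (2 * q y)) * ⟪v y, w⟫_ℝ := by
    intro w
    rw [ht y]
    nth_rewrite 1 [show (y : V) = v y + ⟪b, y⟫_ℝ • b by rw [hv]; abel]
    simp only [inner_add_left, inner_smul_left, RCLike.star_def, conj_trivial]
    field_simp
    ring
  -- basic derivatives
  have hbder : HasFDerivAt (fun z : V => ⟪b, z⟫_ℝ) ((innerSL ℝ b : V →L[ℝ] ℝ)) y :=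
    (innerSL ℝ b : V →L[ℝ] ℝ).hasFDerivAt
  have hQ' : HasFDerivAt Q ((2 : ℝ) • (innerSL ℝ (v y) : V →L[ℝ] ℝ)) y := by
    have h0 := ((hasFDerivAt_id y).inner ℝ (hasFDerivAt_id y)).sub (hbder.mul hbder)
    refine HasFDerivAt.congr_fderiv (f := Q) h0 ?_
    ext w
    simp [fderivInnerCLM_apply, hv, inner_sub_left, inner_smul_left, real_inner_comm y w]
    ring
  have hq' : HasFDerivAt q ((q y)⁻¹ • (innerSL ℝ (v y) : V →L[ℝ] ℝ)) y := by
    have h0 := (Real.hasDerivAt_sqrt (ne_of_gt hQy)).comp_hasFDerivAt y hQ'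
    have h1 : HasFDerivAt (fun z => Real.sqrt (Q z))
        ((1 / (2 * Real.sqrt (Q y))) • ((2 : ℝ) • (innerSL ℝ (v y) : V →L[ℝ] ℝ))) y := h0
    refine (h1.congr_of_eventuallyEq (Eventually.of_forall fun z => (hqQ z))).congr_fderiv ?_
    rw [← hqQ y]
    ext w
    simp only [ContinuousLinearMap.smul_apply, innerSL_apply_apply, smul_eq_mul]
    field_simp
  -- derivative of A
  have hA' : HasFDerivAt A
      ((innerSL ℝ b : V →L[ℝ] ℝ) + (g / 2) • ((q y)⁻¹ • (innerSL ℝ (v y) : V →L[ℝ] ℝ))) y :=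
    (hbder.add (hq'.const_mul (g / 2))).congr_of_eventuallyEq
      (Eventually.of_forall fun z => by rw [hA]; rfl)
  -- derivative of B
  have hB' : HasFDerivAt B ((2 : ℝ) • (innerSL ℝ (t y) : V →L[ℝ] ℝ)) y := by
    have h0 := ((hbder.mul hbder).add ((hbder.mul hq').const_mul g)).add (hq'.mul hq')
    refine (h0.congr_of_eventuallyEq (Eventually.of_forall fun z => by rw [hB]; simp only [Pi.add_apply, Pi.mul_apply]; ring)).congr_fderiv ?_
    ext w
    simp only [ContinuousLinearMap.add_apply, ContinuousLinearMap.smul_apply, innerSL_apply_apply,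
      smul_eq_mul]
    rw [htw w]
    field_simp
    ring
  -- derivative of s = sqrt (B z)
  have hD' : HasFDerivAt (fun z => Real.sqrt (B z)) (s⁻¹ • (innerSL ℝ (t y) : V →L[ℝ] ℝ)) y := by
    have h0 := (Real.hasDerivAt_sqrt hBy.ne').comp_hasFDerivAt y hB'
    have h1 : HasFDerivAt (fun z => Real.sqrt (B z))
        ((1 / (2 * Real.sqrt (B y))) • ((2 : ℝ) • (innerSL ℝ (t y) : V →L[ℝ] ℝ))) y := h0
    refine h1.congr_fderiv ?_
    rw [← hsdef]
    ext w
    simp only [ContinuousLinearMap.smul_apply, innerSL_apply_apply, smul_eq_mul]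
    field_simp
  -- derivative of inverse of sqrt(B)
  have hDinv : HasFDerivAt (fun z => (Real.sqrt (B z))⁻¹)
      ((-(s ^ 2)⁻¹ * s⁻¹) • (innerSL ℝ (t y) : V →L[ℝ] ℝ)) y := by
    have h0 := (hasDerivAt_inv (x := s) hsne).comp_hasFDerivAt y hD'
    refine h0.congr_fderiv ?_
    rw [smul_smul]
  -- derivative of v
  have hv' : HasFDerivAt v
      (ContinuousLinearMap.id ℝ V - (innerSL ℝ b : V →L[ℝ] ℝ).smulRight b) y := by
    refine (ContinuousLinearMap.id ℝ V - (innerSL ℝ b : V →L[ℝ] ℝ).smulRight b).hasFDerivAt.congr_of_eventuallyEq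
      (Eventually.of_forall fun z => ?_)
    rw [hv]
    simp
  -- the two basic functions
  set uu : V → ℝ := fun z => A z * (Real.sqrt (B z))⁻¹ with huu
  set WW : V → V := fun z => (Real.sqrt (B z))⁻¹ • v z with hWW
  obtain ⟨Du, hu, hDuv⟩ : ∃ L : V →L[ℝ] ℝ, HasFDerivAt uu L y ∧
      ∀ w, L w = (⟪b, w⟫_ℝ + g / 2 * ⟪v y, w⟫_ℝ / q y) / s
        - A y * ⟪t y, w⟫_ℝ / s ^ 3 := by
    refine ⟨_, hA'.mul hDinv, fun w => ?_⟩
    simp only [ContinuousLinearMap.add_apply, ContinuousLinearMap.smul_apply, innerSL_apply_apply,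
      smul_eq_mul]
    field_simp
    ring
  obtain ⟨DW, hW, hDWv⟩ : ∃ L : V →L[ℝ] V, HasFDerivAt WW L y ∧
      ∀ w, L w = s⁻¹ • (w - ⟪b, w⟫_ℝ • b) - (⟪t y, w⟫_ℝ / s ^ 3) • v y := by
    refine ⟨_, hDinv.smul hv', fun w => ?_⟩
    simp only [ContinuousLinearMap.add_apply, ContinuousLinearMap.smul_apply,
      ContinuousLinearMap.smulRight_apply, ContinuousLinearMap.coe_sub', Pi.sub_apply,
      ContinuousLinearMap.coe_id', id_eq, innerSL_apply_apply, smul_eq_mul]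
    module
  -- lam in terms of uu, WW
  have lamEq : ∀ y₁ z : V, y₁ ≠ 0 → z ≠ 0 →
      lam y₁ z = uu y₁ * uu z + h ^ 2 * ⟪WW y₁, WW z⟫_ℝ := by
    intro y₁ z h1 h2
    have hvz : ⟪v y₁, v z⟫_ℝ = ⟪y₁, z⟫_ℝ - ⟪b, y₁⟫_ℝ * ⟪b, z⟫_ℝ := by
      rw [hv, hv]
      simp only [inner_sub_left, inner_sub_right, real_inner_smul_left, real_inner_smul_right, hbb]
      rw [real_inner_comm y₁ b]
      ring
    rw [hlam _ _ h1 h2, Real.sqrt_mul (hBnn y₁), huu, hWW]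
    simp only [real_inner_smul_left, real_inner_smul_right]
    rw [hvz, div_eq_mul_inv, mul_inv]
    ring
  -- the (eventual) inner derivative, as a function of the second variable
  set F : V → (V →L[ℝ] ℝ) := fun z =>
    uu z • Du + h ^ 2 • ((innerSL ℝ (WW z) : V →L[ℝ] ℝ).comp DW) with hF
  have hFz : ∀ z : V, z ≠ 0 → HasFDerivAt (fun y' => lam y' z) (F z) y := by
    intro z hz
    have hinner : HasFDerivAt (fun y' => ⟪WW y', WW z⟫_ℝ)
        ((innerSL ℝ (WW z) : V →L[ℝ] ℝ).comp DW) y := by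
      refine ((innerSL ℝ (WW z) : V →L[ℝ] ℝ).hasFDerivAt.comp y hW).congr_of_eventuallyEq
        (Eventually.of_forall fun y' => ?_)
      simp only [Function.comp_apply, innerSL_apply_apply]
      exact real_inner_comm _ _
    have base := (hu.mul_const (uu z)).add (hinner.const_mul (h ^ 2))
    refine base.congr_of_eventuallyEq ?_
    filter_upwards [eventually_ne_nhds hy0] with y' hy'
    exact lamEq y' z hy' hz
  -- package the map x ↦ (innerSL x).comp DW as a continuous linear map
  set Φ : V →L[ℝ] (V →L[ℝ] ℝ) :=
    ((ContinuousLinearMap.compL ℝ V V ℝ).flip DW).comp (innerSL ℝ : V →L[ℝ] V →L[ℝ] ℝ) with hΦ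
  have hΦval : ∀ x : V, Φ x = (innerSL ℝ x : V →L[ℝ] ℝ).comp DW := fun x => by
    simp [hΦ]
  have hF' : HasFDerivAt F (Du.smulRight Du + h ^ 2 • (Φ.comp DW)) y := by
    have p1 : HasFDerivAt (fun z => uu z • Du) (Du.smulRight Du) y := hu.smul_const Du
    have p2 : HasFDerivAt (fun z : V => h ^ 2 • ((innerSL ℝ (WW z) : V →L[ℝ] ℝ).comp DW))
        (h ^ 2 • (Φ.comp DW)) y := by
      refine ((Φ.hasFDerivAt.comp y hW).const_smul (h ^ 2)).congr_of_eventuallyEq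
        (Eventually.of_forall fun z => ?_)
      simp only [Pi.smul_apply, Function.comp_apply]
      rw [hΦval (WW z)]
    exact p1.add p2
  have gEq : (fun z : V => fderiv ℝ (fun y' => lam y' z) y) =ᶠ[𝓝 y] F := by
    filter_upwards [eventually_ne_nhds hy0] with z hz
    exact (hFz z hz).fderiv
  rw [gEq.fderiv_eq, hF'.fderiv]
  simp only [ContinuousLinearMap.add_apply, ContinuousLinearMap.smulRight_apply,
    ContinuousLinearMap.smul_apply, ContinuousLinearMap.comp_apply, smul_eq_mul, hΦval,
    innerSL_apply_apply]
  rw [hDuv w₁, hDuv w₂, hDWv w₁, hDWv w₂]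
  have hc1 : ⟪w₂, b⟫_ℝ = ⟪b, w₂⟫_ℝ := real_inner_comm _ _
  have hc2 : ⟪w₁, b⟫_ℝ = ⟪b, w₁⟫_ℝ := real_inner_comm _ _
  have hc3 : ⟪v y, b⟫_ℝ = 0 := by rw [real_inner_comm]; exact hvb
  have hc4 : ∀ u : V, ⟪u, v y⟫_ℝ = ⟪v y, u⟫_ℝ := fun u => real_inner_comm _ _
  have hc5 : ⟪w₁, w₂⟫_ℝ = ⟪w₂, w₁⟫_ℝ := real_inner_comm _ _
  simp only [inner_sub_left, inner_sub_right, real_inner_smul_left, real_inner_smul_right,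
    hbb, hvb, hvv, hc1, hc2, hc3, hc4, hc5]
  rw [htw w₁, htw w₂, hA y, ← hs2, hh2]
  have hs2' : s ^ 2 = ⟪b, y⟫_ℝ ^ 2 + g * ⟪b, y⟫_ℝ * q y + q y ^ 2 := by rw [hs2, hB]
  generalize hEg : (⟪b, y⟫_ℝ ^ 2 + g * ⟪b, y⟫_ℝ * q y + q y ^ 2) = E at hs2'
  have hE : E ≠ 0 := by rw [← hs2']; positivity
  have hu2 : s⁻¹ ^ 2 = E⁻¹ := by rw [inv_pow, hs2']
  have hu4 : s⁻¹ ^ 4 = E⁻¹ ^ 2 := by rw [← hu2]; ring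
  have hu6 : s⁻¹ ^ 6 = E⁻¹ ^ 3 := by rw [← hu2]; ring
  ring_nf
  simp only [hu2, hu4, hu6]
  field_simp
  rw [← hEg]
  ring
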